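/- For m = 2, the general inclusion of Proposition XX holds: if A has terms t_0, t_1, t_2 with t_0(x,y,z)=x, t_0(x,x,y)=t_1(x,y,y), t_1(x,x,y)=t_2(x,y,y), t_2(x,y,z)=z, and R_0, R_1, R_2 are relations on A, S_1, S_2, T_1, T_2 are reflexive relations on A, then R_0 ∩ (S_1 ∘ (R_1 ∩ (S_2 ∘ R_2 ∘ T_2)) ∘ T_1) ⊆ R_0 ∩ (S'_1 ∘ (R'_1 ∩ (S'_2 ∘ R_2 ∘ T'_2)) ∘ T'_1), where R'_1 is the least compatible relation containing R_0 ∪ R_1 ∪ R_2, S'_1 and T'_1 are the least compatible relations containing S_2 and T_2 respectively, and S'_2, T'_2 those containing S_1 and T_1 respectively. -/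
import Mathlib


/-- A binary relation `R` is compatible with the algebra given by `ops`. -/
def Compatible {A ι : Type*} {ar : ι → ℕ} (ops : ∀ i : ι, (Fin (ar i) → A) → A)
    (R : A → A → Prop) : Prop :=
  ∀ i (f g : Fin (ar i) → A), (∀ k, R (f k) (g k)) → R (ops i f) (ops i g)

/-- The least compatible relation containing `X`. -/
def Bar {A ι : Type*} {ar : ι → ℕ} (ops : ∀ i : ι, (Fin (ar i) → A) → A)
    (X : A → A → Prop) : A → A → Prop :=
  fun a b => ∀ R : A → A → Prop, Compatible ops R → (∀ x y, X x y → R x y) → R a b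

/-- A ternary operation preserving a binary relation. -/
def PreservesRel {A : Type*} (t : A → A → A → A) (θ : A → A → Prop) : Prop :=
  ∀ a a' b b' c c', θ a a' → θ b b' → θ c c' → θ (t a b c) (t a' b' c')

lemma bar_compat {A ι : Type*} {ar : ι → ℕ} (ops : ∀ i : ι, (Fin (ar i) → A) → A)
    (X : A → A → Prop) : Compatible ops (Bar ops X) :=
  fun i f g h R hR hX => hR i f g (fun k => h k R hR hX)

lemma bar_mem {A ι : Type*} {ar : ι → ℕ} (ops : ∀ i : ι, (Fin (ar i) → A) → A)
    (X : A → A → Prop) {x y : A} (h : X x y) : Bar ops X x y :=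
  fun _ _ hX => hX _ _ h

/-- Proposition XX for m = 2:
R₀ ∩ (S₁ ∘ (R₁ ∩ (S₂ ∘ R₂ ∘ T₂)) ∘ T₁) ⊆ R₀ ∩ (S'₁ ∘ (R'₁ ∩ (S'₂ ∘ R₂ ∘ T'₂)) ∘ T'₁). -/
theorem stmt4 {A ι : Type*} {ar : ι → ℕ} (ops : ∀ i : ι, (Fin (ar i) → A) → A)
    (t₀ t₁ t₂ : A → A → A → A)
    (h0 : ∀ x y z, t₀ x y z = x)
    (h01 : ∀ x y, t₀ x x y = t₁ x y y)
    (h12 : ∀ x y, t₁ x x y = t₂ x y y)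
    (h2 : ∀ x y z, t₂ x y z = z)
    (hterm : ∀ t ∈ ([t₀, t₁, t₂] : List (A → A → A → A)),
      ∀ R : A → A → Prop, Compatible ops R → PreservesRel t R)
    (R₀ R₁ R₂ S₁ S₂ T₁ T₂ : A → A → Prop)
    (hS₁ : ∀ a, S₁ a a) (hS₂ : ∀ a, S₂ a a) (hT₁ : ∀ a, T₁ a a) (hT₂ : ∀ a, T₂ a a) :
    ∀ a b : A,
      (R₀ a b ∧ Relation.Comp (Relation.Comp S₁
        (fun x y => R₁ x y ∧ Relation.Comp (Relation.Comp S₂ R₂) T₂ x y)) T₁ a b) →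
      (R₀ a b ∧ Relation.Comp (Relation.Comp (Bar ops S₂)
        (fun x y => Bar ops (fun u v => R₀ u v ∨ R₁ u v ∨ R₂ u v) x y ∧
          Relation.Comp (Relation.Comp (Bar ops S₁) R₂) (Bar ops T₁) x y))
        (Bar ops T₂) a b) := by
  -- t₁ is a Mal'cev term
  have tL : ∀ x y : A, t₁ x y y = x := fun x y => (h01 x y).symm.trans (h0 x x y)
  have tR : ∀ x y : A, t₁ x x y = y := fun x y => (h12 x y).trans (h2 x y y)
  have ht₁ : ∀ X : A → A → Prop, PreservesRel t₁ (Bar ops X) := fun X =>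
    hterm t₁ (by simp) (Bar ops X) (bar_compat ops X)
  rintro a b ⟨hR0, d, ⟨c, hS1ac, hR1cd, f, ⟨e, hS2ce, hR2ef⟩, hT2fd⟩, hT1db⟩
  refine ⟨hR0, t₁ b d f, ⟨t₁ a c e, ?_, ?_, f, ⟨e, ?_, hR2ef⟩, ?_⟩, ?_⟩
  · -- Bar S₂ a (t₁ a c e)
    have := ht₁ S₂ a a c c c e (bar_mem ops S₂ (hS₂ a)) (bar_mem ops S₂ (hS₂ c))
      (bar_mem ops S₂ hS2ce)
    rwa [tL a c] at this
  · -- Bar (R₀∪R₁∪R₂) (t₁ a c e) (t₁ b d f)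
    exact ht₁ _ a b c d e f (bar_mem ops _ (Or.inl hR0))
      (bar_mem ops _ (Or.inr (Or.inl hR1cd))) (bar_mem ops _ (Or.inr (Or.inr hR2ef)))
  · -- Bar S₁ (t₁ a c e) e
    have := ht₁ S₁ a c c c e e (bar_mem ops S₁ hS1ac) (bar_mem ops S₁ (hS₁ c))
      (bar_mem ops S₁ (hS₁ e))
    rwa [tR c e] at this
  · -- Bar T₁ f (t₁ b d f)
    have := ht₁ T₁ d b d d f f (bar_mem ops T₁ hT1db) (bar_mem ops T₁ (hT₁ d))
      (bar_mem ops T₁ (hT₁ f))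
    rwa [tR d f] at this
  · -- Bar T₂ (t₁ b d f) b
    have := ht₁ T₂ b b d d f d (bar_mem ops T₂ (hT₂ b)) (bar_mem ops T₂ (hT₂ d))
      (bar_mem ops T₂ hT2fd)
    rwa [tL b d] at this
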